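/- Fix $K > 0$, $K \neq 1$, and let $y(t)$ be the solution of $y' = \frac{(1-y)K}{y^2+(1-y^2)K} - 1$, $y(0)=1$. Then $y$ is strictly monotone decreasing in $t$ on $[0,\infty)$. -/

import Mathlib

open Filter Topology Set

private lemma stmt7_aux_right_lt (f : ℝ → ℝ) (a c : ℝ) (hf : HasDerivAt f c a) (hc : c < 0) :
    ∀ᶠ s in 𝓝[>] a, f s < f a := by
  have h := hasDerivAt_iff_tendsto_slope.mp hf
  have h2 : ∀ᶠ s in 𝓝[≠] a, slope f a s < 0 := h.eventually (eventually_lt_nhds hc)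
  have h3 : 𝓝[>] a ≤ 𝓝[≠] a := nhdsWithin_mono _ fun s hs => ne_of_gt hs
  filter_upwards [h3 h2, self_mem_nhdsWithin] with s hs hs'
  rw [slope_def_field] at hs
  have hsa : 0 < s - a := sub_pos.mpr hs'
  have := mul_neg_of_neg_of_pos hs hsa
  rw [div_mul_cancel₀ _ (ne_of_gt hsa)] at this
  linarith

private lemma stmt7_aux_right_gt (f : ℝ → ℝ) (a c : ℝ) (hf : HasDerivAt f c a) (hc : 0 < c) :
    ∀ᶠ s in 𝓝[>] a, f a < f s := by
  have h := stmt7_aux_right_lt (fun x => -f x) a (-c) hf.neg (by linarith)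
  filter_upwards [h] with s hs
  simpa using hs

private lemma stmt7_Dpos (K z : ℝ) (hK : 0 < K) (h1 : 0 < z) (h2 : z ≤ 1) :
    0 < z^2 + (1-z^2)*K := by
  have hz2 : z^2 ≤ 1 := by nlinarith
  have : 0 ≤ (1-z^2)*K := mul_nonneg (by linarith) hK.le
  nlinarith

private lemma stmt7_gneg (K z : ℝ) (hK : 0 < K) (h1 : 0 < z) (h2 : z ≤ 1) :
    (1-z)*K/(z^2+(1-z^2)*K) - 1 < 0 := by
  have hD := stmt7_Dpos K z hK h1 h2
  rw [sub_neg, div_lt_one hD]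
  nlinarith [mul_pos h1 hK, mul_pos h1 h1]

private lemma stmt7_gM (K z : ℝ) (hK : 0 < K) (h1 : 0 < z) (h2 : z ≤ 1) :
    0 < ((1-z)*K/(z^2+(1-z^2)*K) - 1) + (K+1/K)*z := by
  have hD := stmt7_Dpos K z hK h1 h2
  set D := z^2 + (1-z^2)*K with hDdef
  have hMD : z + (1-z)*K < (K+1/K)*D := by
    have e1 : (1/K)*K = 1 := one_div_mul_cancel hK.ne'
    have hz2 : z^2 ≤ 1 := by nlinarith
    rcases le_total K 1 with hc | hc
    · have hKD : K ≤ D := by nlinarith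
      have h4 : (1/K)*K ≤ (1/K)*D := mul_le_mul_of_nonneg_left hKD (by positivity)
      nlinarith [mul_pos hK hD]
    · have hD1 : 1 ≤ D := by
        nlinarith [mul_nonneg (by linarith : (0:ℝ) ≤ 1-z^2) (by linarith : (0:ℝ) ≤ K-1)]
      have h4 : K*1 ≤ K*D := mul_le_mul_of_nonneg_left hD1 hK.le
      have h5 : (0:ℝ) < (1/K)*D := by positivity
      have h6 : z*(1-K) ≤ 0 := mul_nonpos_of_nonneg_of_nonpos h1.le (by linarith)
      nlinarith
  have h3 : 1 - (K+1/K)*z < (1-z)*K/D := by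
    rw [lt_div_iff₀ hD]
    nlinarith [mul_lt_mul_of_pos_left hMD h1]
  linarith

/-- For `K > 0`, `K ≠ 1`, the solution of `y' = (1-y)K/(y²+(1-y²)K) - 1`,
`y(0)=1`, is strictly monotone decreasing on `[0,∞)`. -/
theorem stmt_7 (K : ℝ) (hK : 0 < K) (hK1 : K ≠ 1) (y : ℝ → ℝ) (hy0 : y 0 = 1)
    (hy : ∀ t, 0 ≤ t →
      HasDerivAt y ((1 - y t) * K / ((y t) ^ 2 + (1 - (y t) ^ 2) * K) - 1) t) :
    StrictAntiOn y (Set.Ici 0) := by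
  set M := K + 1/K with hMdef
  have hMpos : 0 < M := by positivity
  have hcont : ∀ t, 0 ≤ t → ContinuousAt y t := fun t ht => (hy t ht).continuousAt
  have hexpc : Continuous fun s : ℝ => Real.exp (-(M*s)) := by continuity
  -- the key invariance claim
  have key : ∀ t, 0 ≤ t → Real.exp (-(M*t)) ≤ y t ∧ y t ≤ 1 := by
    intro t ht
    by_contra hc
    set F := {s : ℝ | 0 ≤ s ∧ ¬(Real.exp (-(M*s)) ≤ y s ∧ y s ≤ 1)} with hFdef
    have hFne : F.Nonempty := ⟨t, ht, hc⟩
    have hFbd : BddBelow F := ⟨0, fun x hx => hx.1⟩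
    set τ := sInf F with hτdef
    have hτ0 : 0 ≤ τ := le_csInf hFne fun x hx => hx.1
    have hbefore : ∀ s, 0 ≤ s → s < τ → Real.exp (-(M*s)) ≤ y s ∧ y s ≤ 1 := by
      intro s hs hsτ
      by_contra h'
      exact absurd (csInf_le hFbd ⟨hs, h'⟩) (not_le.2 hsτ)
    -- at τ the (closed) conditions hold
    have hτgood : Real.exp (-(M*τ)) ≤ y τ ∧ y τ ≤ 1 := by
      rcases eq_or_lt_of_le hτ0 with h0 | hτpos
      · rw [← h0]
        simp [hy0]
      · have hty : Tendsto y (𝓝[<] τ) (𝓝 (y τ)) :=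
          ((hcont τ hτ0).tendsto).mono_left nhdsWithin_le_nhds
        have hte : Tendsto (fun s => Real.exp (-(M*s))) (𝓝[<] τ) (𝓝 (Real.exp (-(M*τ)))) :=
          (hexpc.tendsto τ).mono_left nhdsWithin_le_nhds
        have hev : ∀ᶠ s in 𝓝[<] τ, Real.exp (-(M*s)) ≤ y s ∧ y s ≤ 1 := by
          filter_upwards [Ioo_mem_nhdsLT hτpos] with s hs
          exact hbefore s hs.1.le hs.2
        exact ⟨le_of_tendsto_of_tendsto hte hty (hev.mono fun s hs => hs.1),
          le_of_tendsto hty (hev.mono fun s hs => hs.2)⟩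
    obtain ⟨hyτl, hyτu⟩ := hτgood
    have hyτpos : 0 < y τ := (Real.exp_pos _).trans_le hyτl
    -- upper bound holds just after τ
    have hU : ∀ᶠ s in 𝓝[>] τ, y s ≤ 1 := by
      rcases hyτu.lt_or_eq with h | h
      · have := (hcont τ hτ0).eventually_lt continuousAt_const h
        exact (this.filter_mono nhdsWithin_le_nhds).mono fun s hs => hs.le
      · have hderiv := hy τ hτ0
        rw [h] at hderiv
        norm_num at hderiv
        have := stmt7_aux_right_lt y τ (-1) hderiv (by norm_num)
        exact this.mono fun s hs => by rw [h] at hs; exact hs.le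
    -- lower bound holds just after τ
    have hL : ∀ᶠ s in 𝓝[>] τ, Real.exp (-(M*s)) ≤ y s := by
      rcases hyτl.lt_or_eq with h | h
      · have := (hexpc.continuousAt).eventually_lt (hcont τ hτ0) h
        exact (this.filter_mono nhdsWithin_le_nhds).mono fun s hs => hs.le
      · have hi : HasDerivAt (fun s : ℝ => -(M*s)) (-M) τ := by
          exact (((hasDerivAt_id τ).const_mul M).neg).congr_deriv (by simp)
        have he : HasDerivAt (fun s => Real.exp (-(M*s))) (Real.exp (-(M*τ)) * (-M)) τ := hi.exp
        have hφ := (hy τ hτ0).sub he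
        have hc0 : 0 < ((1 - y τ) * K / ((y τ) ^ 2 + (1 - (y τ) ^ 2) * K) - 1)
            - Real.exp (-(M*τ)) * (-M) := by
          rw [h]
          have := stmt7_gM K (y τ) hK hyτpos hyτu
          rw [← hMdef] at this
          nlinarith
        have := stmt7_aux_right_gt _ τ _ hφ hc0
        refine this.mono fun s hs => ?_
        simp only [Pi.sub_apply] at hs
        rw [h] at hs
        linarith
    have hcomb : ∀ᶠ s in 𝓝[>] τ, s ∉ F := by
      filter_upwards [hU, hL] with s h1 h2
      exact fun hs => hs.2 ⟨h2, h1⟩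
    obtain ⟨u, hu, hsub⟩ := mem_nhdsGT_iff_exists_Ioo_subset.mp hcomb
    have huτ : u ≤ τ := by
      apply le_csInf hFne
      intro s hs
      have hτs : τ ≤ s := csInf_le hFbd hs
      rcases eq_or_lt_of_le hτs with h | hlt
      · exact absurd ⟨hyτl, hyτu⟩ (h ▸ hs.2)
      · by_contra hus
        push_neg at hus
        exact hsub ⟨hlt, hus⟩ hs
    exact absurd hu (not_lt.mpr huτ)
  -- conclude strict antitonicity from negative derivative
  have hconOn : ContinuousOn y (Ici 0) := fun s hs => (hcont s hs).continuousWithinAt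
  apply strictAntiOn_of_deriv_neg (convex_Ici 0) hconOn
  intro x hx
  rw [interior_Ici] at hx
  have h0x : (0:ℝ) ≤ x := le_of_lt hx
  obtain ⟨hl, hu⟩ := key x h0x
  have hyx : 0 < y x := (Real.exp_pos _).trans_le hl
  rw [(hy x h0x).deriv]
  exact stmt7_gneg K (y x) hK hyx hu
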